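/- Let N > 2 be a real number and set c* = (N−2)^{(N−2)/2} / N^{(N+2)/2}. For c > 0 define F_c(v) = (v²−1)/N + 2c·v^{2−N} for v > 0, and set a_c = sup({0} ∪ {v ∈ (0,1] : F_c(v) ≤ 0}). Then F_c(v) > 0 for all v ∈ (a_c, 1), and the function v ↦ 1/√(F_c(v)) fails to be Lebesgue integrable on (a_c, 1) if and only if c = c*. -/

import Mathlib

open Real Filter Set Topology MeasureTheory

namespace Stmt12Aux

noncomputable def G (N d v : ℝ) : ℝ := (v ^ 2 - 1) / N + 2 * d * v ^ (2 - N)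
noncomputable def P (N d v : ℝ) : ℝ := 2 * v / N + 2 * d * ((2 - N) * v ^ (1 - N))
noncomputable def vm (N d : ℝ) : ℝ := (d * N * (N - 2)) ^ (1 / N : ℝ)
noncomputable def Q (N d : ℝ) : ℝ := 2 / N + 2 * d * ((N - 2) * ((N - 1) * (vm N d) ^ (-N : ℝ)))

variable {N d : ℝ}

lemma hasDerivAt_G (hv : (0:ℝ) < v) : HasDerivAt (G N d) (P N d v) v := by
  have h1 : HasDerivAt (fun v : ℝ => (v ^ 2 - 1) / N) (2 * v / N) v := by
    simpa using ((hasDerivAt_pow 2 v).sub_const 1).div_const N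
  have h2 : HasDerivAt (fun v : ℝ => v ^ (2 - N)) ((2 - N) * v ^ (1 - N)) v := by
    have h := Real.hasDerivAt_rpow_const (x := v) (p := 2 - N) (Or.inl hv.ne')
    have e : 2 - N - 1 = 1 - N := by ring
    rwa [e] at h
  exact h1.add (h2.const_mul (2 * d))

lemma hasDerivAt_P (hv : (0:ℝ) < v) :
    HasDerivAt (P N d) (2 / N + 2 * d * ((2 - N) * ((1 - N) * v ^ (-N : ℝ)))) v := by
  have h1 : HasDerivAt (fun v : ℝ => 2 * v / N) (2 / N) v := by
    simpa using ((hasDerivAt_id v).const_mul 2).div_const N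
  have h2 : HasDerivAt (fun v : ℝ => v ^ (1 - N)) ((1 - N) * v ^ (-N : ℝ)) v := by
    have h := Real.hasDerivAt_rpow_const (x := v) (p := 1 - N) (Or.inl hv.ne')
    have e : 1 - N - 1 = -N := by ring
    rwa [e] at h
  exact h1.add ((h2.const_mul (2 - N)).const_mul (2 * d))


lemma P_deriv_pos (hN : 2 < N) (hd : 0 < d) (hv : (0:ℝ) < v) :
    0 < 2 / N + 2 * d * ((2 - N) * ((1 - N) * v ^ (-N : ℝ))) := by
  have h1 : (0:ℝ) < v ^ (-N : ℝ) := Real.rpow_pos_of_pos hv _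
  have h2 : (0:ℝ) < (2 - N) * (1 - N) := by nlinarith
  have h3 : 0 < 2 / N := by positivity
  nlinarith [mul_pos (mul_pos hd h2) h1]

lemma P_mono (hN : 2 < N) (hd : 0 < d) : StrictMonoOn (P N d) (Ioi (0:ℝ)) := by
  apply strictMonoOn_of_deriv_pos (convex_Ioi 0)
  · exact fun v hv => ((hasDerivAt_P (d := d) hv).differentiableAt.continuousAt).continuousWithinAt
  · intro v hv
    rw [interior_Ioi] at hv
    rw [(hasDerivAt_P hv).deriv]
    exact P_deriv_pos hN hd hv

lemma vm_pos (hN : 2 < N) (hd : 0 < d) : 0 < vm N d :=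
  Real.rpow_pos_of_pos (mul_pos (mul_pos hd (by linarith)) (by linarith)) _

lemma vm_rpow (hN : 2 < N) (hd : 0 < d) : vm N d ^ (N : ℝ) = d * N * (N - 2) := by
  have h0 : (0:ℝ) < d * N * (N - 2) := mul_pos (mul_pos hd (by linarith)) (by linarith)
  rw [vm, ← Real.rpow_mul h0.le, one_div, inv_mul_cancel₀ (by linarith : N ≠ 0), Real.rpow_one]

lemma P_vm (hN : 2 < N) (hd : 0 < d) : P N d (vm N d) = 0 := by
  have h0 := vm_pos hN hd
  have h1 : vm N d ^ (1 - N) = vm N d * (d * N * (N - 2))⁻¹ := by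
    rw [sub_eq_add_neg, Real.rpow_add h0, Real.rpow_one, Real.rpow_neg h0.le, vm_rpow hN hd]
  rw [P, h1]
  have hd' : d ≠ 0 := hd.ne'
  have hN' : N ≠ 0 := by linarith
  have hN2 : N - 2 ≠ 0 := by linarith
  field_simp
  ring

lemma vm_sq (hN : 2 < N) (hd : 0 < d) :
    vm N d ^ 2 = (d * N * (N - 2)) ^ (2 / N : ℝ) := by
  have h0 : (0:ℝ) ≤ d * N * (N - 2) :=
    (mul_pos (mul_pos hd (by linarith)) (by linarith : (0:ℝ) < N - 2)).le
  rw [vm, ← Real.rpow_two, ← Real.rpow_mul h0]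
  congr 1
  ring

lemma G_vm (hN : 2 < N) (hd : 0 < d) :
    G N d (vm N d) = (N * vm N d ^ 2 - (N - 2)) / (N * (N - 2)) := by
  have h0 := vm_pos hN hd
  have h1 : vm N d ^ (2 - N) = vm N d ^ 2 * (d * N * (N - 2))⁻¹ := by
    rw [sub_eq_add_neg, Real.rpow_add h0, Real.rpow_neg h0.le, vm_rpow hN hd, Real.rpow_two]
  rw [G, h1]
  have hd' : d ≠ 0 := hd.ne'
  have hN' : N ≠ 0 := by linarith
  have hN2 : N - 2 ≠ 0 := by linarith
  field_simp
  ring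

lemma G_one : G N d 1 = 2 * d := by simp [G]

lemma G_mono (hN : 2 < N) (hd : 0 < d) : StrictMonoOn (G N d) (Ici (vm N d)) := by
  have h0 := vm_pos hN hd
  apply strictMonoOn_of_deriv_pos (convex_Ici _)
  · exact fun v hv =>
      ((hasDerivAt_G (d := d) (lt_of_lt_of_le h0 hv)).differentiableAt.continuousAt).continuousWithinAt
  · intro v hv
    rw [interior_Ici] at hv
    have hv0 : (0:ℝ) < v := lt_trans h0 hv
    rw [(hasDerivAt_G hv0).deriv]
    have := P_mono hN hd (mem_Ioi.2 h0) (mem_Ioi.2 hv0) hv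
    rwa [P_vm hN hd] at this

lemma G_anti (hN : 2 < N) (hd : 0 < d) : StrictAntiOn (G N d) (Ioc (0:ℝ) (vm N d)) := by
  have h0 := vm_pos hN hd
  apply strictAntiOn_of_deriv_neg (convex_Ioc _ _)
  · exact fun v hv => ((hasDerivAt_G (d := d) hv.1).differentiableAt.continuousAt).continuousWithinAt
  · intro v hv
    rw [interior_Ioc] at hv
    rw [(hasDerivAt_G hv.1).deriv]
    have := P_mono hN hd (mem_Ioi.2 hv.1) (mem_Ioi.2 h0) hv.2
    rwa [P_vm hN hd] at this

lemma G_min (hN : 2 < N) (hd : 0 < d) (hv : (0:ℝ) < v) : G N d (vm N d) ≤ G N d v := by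
  have h0 := vm_pos hN hd
  rcases lt_trichotomy v (vm N d) with h | h | h
  · exact (G_anti hN hd ⟨hv, h.le⟩ ⟨h0, le_refl _⟩ h).le
  · rw [h]
  · exact (G_mono hN hd (self_mem_Ici) (mem_Ici.2 h.le) h).le

lemma G_min' (hN : 2 < N) (hd : 0 < d) (hv : (0:ℝ) < v) (hne : v ≠ vm N d) :
    G N d (vm N d) < G N d v := by
  have h0 := vm_pos hN hd
  rcases lt_trichotomy v (vm N d) with h | h | h
  · exact G_anti hN hd ⟨hv, h.le⟩ ⟨h0, le_refl _⟩ h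
  · exact absurd h hne
  · exact G_mono hN hd self_mem_Ici (mem_Ici.2 h.le) h


lemma Q_pos (hN : 2 < N) (hd : 0 < d) : 0 < Q N d := by
  have h1 : (0:ℝ) < (vm N d) ^ (-N : ℝ) := Real.rpow_pos_of_pos (vm_pos hN hd) _
  have h2 : (0:ℝ) < (N - 2) * (N - 1) := by nlinarith
  have h3 : 0 < 2 / N := by positivity
  rw [Q]
  nlinarith [mul_pos (mul_pos hd h2) h1]

/-- Upper linear bound on the derivative: `P N d v ≤ Q N d * (v - vm N d)` for `v ≥ vm`. -/
lemma P_le (hN : 2 < N) (hd : 0 < d) :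
    ∀ v ∈ Ici (vm N d), P N d v ≤ Q N d * (v - vm N d) := by
  have h0 := vm_pos hN hd
  have key : MonotoneOn (fun v => Q N d * (v - vm N d) - P N d v) (Ici (vm N d)) := by
    apply monotoneOn_of_deriv_nonneg (convex_Ici _)
    · intro v hv
      have hv0 : (0:ℝ) < v := lt_of_lt_of_le h0 hv
      exact ((((hasDerivAt_id' (x := v)).sub_const _).const_mul _).sub
        (hasDerivAt_P hv0)).continuousAt.continuousWithinAt
    · intro v hv
      rw [interior_Ici] at hv
      have hv0 : (0:ℝ) < v := lt_trans h0 hv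
      exact ((((hasDerivAt_id' (x := v)).sub_const _).const_mul _).sub
        (hasDerivAt_P hv0)).differentiableAt.differentiableWithinAt
    · intro v hv
      rw [interior_Ici] at hv
      have hv0 : (0:ℝ) < v := lt_trans h0 hv
      rw [show deriv (fun v => Q N d * (v - vm N d) - P N d v) v = _ from ((((hasDerivAt_id' (x := v)).sub_const _).const_mul _).sub (hasDerivAt_P hv0)).deriv]
      have hle : v ^ (-N : ℝ) ≤ (vm N d) ^ (-N : ℝ) := by
        rw [Real.rpow_neg h0.le, Real.rpow_neg hv0.le]
        apply inv_anti₀ (Real.rpow_pos_of_pos h0 _)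
        exact Real.rpow_le_rpow h0.le hv.le (by linarith)
      have h1 : (0:ℝ) < (2 - N) * (1 - N) := by nlinarith
      have : 2 * d * ((2 - N) * ((1 - N) * v ^ (-N : ℝ)))
          ≤ 2 * d * ((N - 2) * ((N - 1) * (vm N d) ^ (-N : ℝ))) := by
        have h2d : (0:ℝ) ≤ 2 * d * ((N - 2) * (N - 1)) := by nlinarith
        nlinarith [mul_le_mul_of_nonneg_left hle h2d]
      simp only [Q, mul_one]
      linarith
  intro v hv
  have := key self_mem_Ici hv (mem_Ici.1 hv)
  simp only [sub_self, mul_zero, P_vm hN hd, sub_zero] at this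
  linarith

/-- Taylor-type upper bound: `G N d v ≤ G N d (vm N d) + Q N d / 2 * (v - vm N d)^2` on `Ici vm`. -/
lemma G_taylor (hN : 2 < N) (hd : 0 < d) :
    ∀ v ∈ Ici (vm N d), G N d v ≤ G N d (vm N d) + Q N d / 2 * (v - vm N d) ^ 2 := by
  have h0 := vm_pos hN hd
  have key : MonotoneOn
      (fun v => G N d (vm N d) + Q N d / 2 * (v - vm N d) ^ 2 - G N d v) (Ici (vm N d)) := by
    apply monotoneOn_of_deriv_nonneg (convex_Ici _)
    · intro v hv
      have hv0 : (0:ℝ) < v := lt_of_lt_of_le h0 hv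
      exact (((((hasDerivAt_id' (x := v)).sub_const _).pow 2).const_mul _).const_add _ |>.sub
        (hasDerivAt_G hv0)).continuousAt.continuousWithinAt
    · intro v hv
      rw [interior_Ici] at hv
      have hv0 : (0:ℝ) < v := lt_trans h0 hv
      exact (((((hasDerivAt_id' (x := v)).sub_const _).pow 2).const_mul _).const_add _ |>.sub
        (hasDerivAt_G hv0)).differentiableAt.differentiableWithinAt
    · intro v hv
      rw [interior_Ici] at hv
      have hv0 : (0:ℝ) < v := lt_trans h0 hv
      rw [show deriv (fun v => G N d (vm N d) + Q N d / 2 * (v - vm N d) ^ 2 - G N d v) v = _ from (((((hasDerivAt_id' (x := v)).sub_const _).pow 2).const_mul _).const_add _ |>.sub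
        (hasDerivAt_G hv0)).deriv]
      have := P_le hN hd v (mem_Ici.2 hv.le)
      ring_nf
      ring_nf at this
      nlinarith [this]
  intro v hv
  have := key self_mem_Ici hv (mem_Ici.1 hv)
  simp only [sub_self] at this
  nlinarith [this]

/-- Lower linear bound via convexity: for `vm ≤ b`, `G N d b + P N d b * (v - b) ≤ G N d v` on `Ici b`. -/
lemma G_lower (hN : 2 < N) (hd : 0 < d) (b : ℝ) (hb : 0 < b) (hbm : vm N d ≤ b) :
    ∀ v ∈ Ici b, G N d b + P N d b * (v - b) ≤ G N d v := by
  have h0 := vm_pos hN hd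
  have key : MonotoneOn (fun v => G N d v - P N d b * (v - b)) (Ici b) := by
    apply monotoneOn_of_deriv_nonneg (convex_Ici _)
    · intro v hv
      have hv0 : (0:ℝ) < v := lt_of_lt_of_le hb hv
      exact ((hasDerivAt_G hv0).sub
        (((hasDerivAt_id' (x := v)).sub_const _).const_mul _)).continuousAt.continuousWithinAt
    · intro v hv
      rw [interior_Ici] at hv
      have hv0 : (0:ℝ) < v := lt_trans hb hv
      exact ((hasDerivAt_G hv0).sub
        (((hasDerivAt_id' (x := v)).sub_const _).const_mul _)).differentiableAt.differentiableWithinAt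
    · intro v hv
      rw [interior_Ici] at hv
      have hv0 : (0:ℝ) < v := lt_trans hb hv
      rw [show deriv (fun v => G N d v - P N d b * (v - b)) v = _ from ((hasDerivAt_G hv0).sub (((hasDerivAt_id' (x := v)).sub_const _).const_mul _)).deriv]
      have : P N d b ≤ P N d v := (P_mono hN hd (mem_Ioi.2 hb) (mem_Ioi.2 hv0) hv).le
      simp only [mul_one]
      linarith
  intro v hv
  have := key self_mem_Ici hv (mem_Ici.1 hv)
  simp only [sub_self, mul_zero, sub_zero] at this
  linarith

lemma G_meas : Measurable (G N d) := by
  apply Measurable.add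
  · exact ((measurable_id.pow_const 2).sub_const 1).div_const N
  · exact (measurable_id.pow measurable_const).const_mul _


lemma integrable_sqrt_inv_sub (b : ℝ) (hb : b < 1) :
    IntegrableOn (fun v : ℝ => (v - b) ^ (-(1/2) : ℝ)) (Ioo b 1) := by
  have h1 : IntervalIntegrable (fun x : ℝ => x ^ (-(1/2) : ℝ)) volume 0 (1 - b) :=
    intervalIntegral.intervalIntegrable_rpow' (by norm_num)
  have h2 := h1.comp_sub_right b
  rw [zero_add, sub_add_cancel] at h2
  exact (intervalIntegrable_iff_integrableOn_Ioo_of_le hb.le).1 h2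

lemma integrable_of_linear_lower (f : ℝ → ℝ) (hmeas : Measurable f) {b : ℝ} (hb : b < 1)
    {m : ℝ} (hm : 0 < m) (h : ∀ v ∈ Ioo b 1, m * (v - b) ≤ f v) :
    IntegrableOn (fun v => 1 / Real.sqrt (f v)) (Ioo b 1) := by
  have hint : IntegrableOn
      (fun v : ℝ => (Real.sqrt m)⁻¹ * (v - b) ^ (-(1/2) : ℝ)) (Ioo b 1) :=
    (integrable_sqrt_inv_sub b hb).const_mul _
  refine hint.mono' ?_ ?_
  · exact ((Real.continuous_sqrt.measurable.comp hmeas).inv.const_mul 1).aestronglyMeasurable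
  · rw [ae_restrict_iff' measurableSet_Ioo]
    filter_upwards with v hv
    have hvb : 0 < v - b := sub_pos.2 hv.1
    have hfv : 0 < f v := lt_of_lt_of_le (by positivity) (h v hv)
    have h1 : Real.sqrt (m * (v - b)) ≤ Real.sqrt (f v) := Real.sqrt_le_sqrt (h v hv)
    have h2 : 0 < Real.sqrt (m * (v - b)) := Real.sqrt_pos.2 (by positivity)
    have h3 : 1 / Real.sqrt (f v) ≤ 1 / Real.sqrt (m * (v - b)) :=
      one_div_le_one_div_of_le h2 h1
    have h4 : Real.sqrt (m * (v - b)) = Real.sqrt m * Real.sqrt (v - b) :=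
      Real.sqrt_mul hm.le _
    have h5 : (v - b) ^ (-(1/2) : ℝ) = (Real.sqrt (v - b))⁻¹ := by
      rw [Real.rpow_neg hvb.le, Real.sqrt_eq_rpow]
    have h6 : 0 ≤ 1 / Real.sqrt (f v) := by positivity
    have h7 : (Real.sqrt m)⁻¹ * (v - b) ^ (-(1/2) : ℝ) = 1 / Real.sqrt (m * (v - b)) := by
      rw [h5, h4, one_div, mul_inv]
    rw [Real.norm_eq_abs, abs_of_nonneg h6, h7]
    exact h3

lemma integrable_of_pos_lower (f : ℝ → ℝ) (hmeas : Measurable f) {a b : ℝ}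
    {m : ℝ} (hm : 0 < m) (h : ∀ v ∈ Ioo a b, m ≤ f v) :
    IntegrableOn (fun v => 1 / Real.sqrt (f v)) (Ioo a b) := by
  have hint : IntegrableOn (fun _ : ℝ => (Real.sqrt m)⁻¹) (Ioo a b) :=
    integrableOn_const measure_Ioo_lt_top.ne
  refine hint.mono' ?_ ?_
  · exact ((Real.continuous_sqrt.measurable.comp hmeas).inv.const_mul 1).aestronglyMeasurable
  · rw [ae_restrict_iff' measurableSet_Ioo]
    filter_upwards with v hv
    have hfv : 0 < f v := lt_of_lt_of_le hm (h v hv)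
    have h1 : Real.sqrt m ≤ Real.sqrt (f v) := Real.sqrt_le_sqrt (h v hv)
    have h2 : 0 < Real.sqrt m := Real.sqrt_pos.2 hm
    rw [Real.norm_eq_abs, abs_of_nonneg (by positivity : (0:ℝ) ≤ 1 / Real.sqrt (f v)), one_div]
    exact inv_anti₀ h2 h1

lemma not_integrable_of_sq_upper (f : ℝ → ℝ) {a : ℝ} (ha : a < 1)
    {M : ℝ} (hM : 0 < M) (hpos : ∀ v ∈ Ioo a 1, 0 < f v)
    (h : ∀ v ∈ Ioo a 1, f v ≤ M * (v - a) ^ 2) :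
    ¬ IntegrableOn (fun v => 1 / Real.sqrt (f v)) (Ioo a 1) := by
  intro hint
  have hmono : IntegrableOn (fun v : ℝ => (v - a)⁻¹) (Ioo a 1) := by
    refine Integrable.mono' (g := fun v => Real.sqrt M * (1 / Real.sqrt (f v)))
      (hint.const_mul _) ?_ ?_
    · exact (measurable_id.sub_const a).inv.aestronglyMeasurable
    · rw [ae_restrict_iff' measurableSet_Ioo]
      filter_upwards with v hv
      have hva : 0 < v - a := sub_pos.2 hv.1
      have hfv := hpos v hv
      have h1 : Real.sqrt (f v) ≤ Real.sqrt M * (v - a) := by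
        have := Real.sqrt_le_sqrt (h v hv)
        rwa [Real.sqrt_mul hM.le, Real.sqrt_sq hva.le] at this
      have h3 : 0 < Real.sqrt (f v) := Real.sqrt_pos.2 hfv
      have hM' : 0 < Real.sqrt M := Real.sqrt_pos.2 hM
      have h5 : (Real.sqrt M * (v - a))⁻¹ ≤ (Real.sqrt (f v))⁻¹ := inv_anti₀ h3 h1
      rw [Real.norm_eq_abs, abs_of_nonneg (by positivity : (0:ℝ) ≤ (v - a)⁻¹), one_div]
      calc (v - a)⁻¹ = Real.sqrt M * (Real.sqrt M * (v - a))⁻¹ := by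
            rw [mul_inv, ← mul_assoc, mul_inv_cancel₀ hM'.ne', one_mul]
        _ ≤ Real.sqrt M * (Real.sqrt (f v))⁻¹ := by
            exact mul_le_mul_of_nonneg_left h5 hM'.le
  have h6 : IntervalIntegrable (fun v : ℝ => (v - a)⁻¹) volume a 1 :=
    (intervalIntegrable_iff_integrableOn_Ioo_of_le ha.le).2 hmono
  rw [intervalIntegrable_sub_inv_iff] at h6
  rcases h6 with h6 | h6
  · exact ha.ne h6
  · exact h6 (left_mem_uIcc)

end Stmt12Aux

open Stmt12Aux in
theorem stmt_12 (N : ℝ) (hN : 2 < N) (c : ℝ) (hc : 0 < c)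
    (cs : ℝ) (hcs : cs = (N - 2) ^ ((N - 2) / 2) / N ^ ((N + 2) / 2))
    (F : ℝ → ℝ) (hF : ∀ v, F v = (v ^ 2 - 1) / N + 2 * c * v ^ (2 - N))
    (ac : ℝ) (hac : ac = sSup ({0} ∪ {v ∈ Set.Ioc (0 : ℝ) 1 | F v ≤ 0})) :
    (∀ v ∈ Set.Ioo ac 1, 0 < F v) ∧
    (¬ MeasureTheory.IntegrableOn (fun v => 1 / Real.sqrt (F v)) (Set.Ioo ac 1) ↔ c = cs) := by
  have hN0 : (0:ℝ) < N := by linarith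
  have hN2 : (0:ℝ) < N - 2 := by linarith
  have hFeq : F = Stmt12Aux.G N c := funext hF
  subst hFeq
  subst hac
  subst hcs
  set cstar := (N - 2) ^ ((N - 2) / 2) / N ^ ((N + 2) / 2) with hcstar
  have hcstar_pos : 0 < cstar :=
    div_pos (Real.rpow_pos_of_pos hN2 _) (Real.rpow_pos_of_pos hN0 _)
  have hNp : (0:ℝ) < N ^ (N / 2 : ℝ) := Real.rpow_pos_of_pos hN0 _
  have e1 : (N - 2) ^ (N / 2 : ℝ) = (N - 2) ^ ((N - 2) / 2) * (N - 2) := by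
    rw [show (N:ℝ)/2 = (N-2)/2 + 1 by ring, Real.rpow_add hN2, Real.rpow_one]
  have e2 : N ^ ((N + 2) / 2 : ℝ) = N ^ (N / 2 : ℝ) * N := by
    rw [show (N+2)/2 = N/2 + 1 by ring, Real.rpow_add hN0, Real.rpow_one]
  have hstar : cstar * N * (N - 2) = ((N - 2) / N) ^ (N / 2 : ℝ) := by
    rw [hcstar, Real.div_rpow hN2.le hN0.le, e1, e2]
    field_simp
  have hss : (((N - 2) / N) ^ (N / 2 : ℝ)) ^ (2 / N : ℝ) = (N - 2) / N := by
    rw [← Real.rpow_mul (div_nonneg hN2.le hN0.le),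
      show (N/2) * (2/N) = 1 by field_simp, Real.rpow_one]
  have hdivlt : (N - 2) / N < 1 := (div_lt_one hN0).2 (by linarith)
  rcases lt_trichotomy c cstar with hlt | heq | hgt
  · -- c < cstar : integrable, simple zero
    have h0 := vm_pos hN hc
    have hs_lt : c * N * (N - 2) < cstar * N * (N - 2) := by
      have := mul_lt_mul_of_pos_right (mul_lt_mul_of_pos_right hlt hN0) hN2
      linarith
    have hvm_sq_lt : vm N c ^ 2 < (N - 2) / N := by
      have h1 : (c * N * (N-2)) ^ (2/N : ℝ) < (cstar * N * (N-2)) ^ (2/N : ℝ) :=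
        Real.rpow_lt_rpow (by positivity) hs_lt (by positivity)
      rw [hstar, hss] at h1
      rwa [vm_sq hN hc]
    have hvm1 : vm N c < 1 := by nlinarith
    have hGvm_neg : G N c (vm N c) < 0 := by
      rw [G_vm hN hc]
      apply div_neg_of_neg_of_pos
      · have := (lt_div_iff₀ hN0).1 hvm_sq_lt
        nlinarith
      · positivity
    have hcont : ContinuousOn (G N c) (Icc (vm N c) 1) := fun v hv =>
      ((hasDerivAt_G (d := c) (lt_of_lt_of_le h0 hv.1)).differentiableAt.continuousAt).continuousWithinAt
    obtain ⟨b, hbmem, hGb⟩ := intermediate_value_Ioo hvm1.le hcont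
      (show (0:ℝ) ∈ Ioo (G N c (vm N c)) (G N c 1) by
        refine ⟨hGvm_neg, ?_⟩
        rw [G_one]
        linarith)
    have hb0 : 0 < b := lt_trans h0 hbmem.1
    have hb1 : b < 1 := hbmem.2
    have hPb : 0 < P N c b := by
      have := P_mono hN hc (mem_Ioi.2 h0) (mem_Ioi.2 hb0) hbmem.1
      rwa [P_vm hN hc] at this
    have hT : IsGreatest ({0} ∪ {v ∈ Ioc (0:ℝ) 1 | G N c v ≤ 0}) b := by
      constructor
      · exact Or.inr ⟨⟨hb0, hb1.le⟩, hGb.le⟩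
      · rintro x (rfl | ⟨hx1, hx2⟩)
        · exact hb0.le
        · by_contra hbx
          push_neg at hbx
          have hx : 0 < G N c x := by
            have := G_mono hN hc (mem_Ici.2 hbmem.1.le)
              (mem_Ici.2 (le_trans hbmem.1.le hbx.le)) hbx
            rwa [hGb] at this
          linarith
    rw [hT.csSup_eq]
    have hpos : ∀ v ∈ Ioo b 1, 0 < G N c v := by
      intro v hv
      have := G_mono hN hc (mem_Ici.2 hbmem.1.le)
        (mem_Ici.2 (le_trans hbmem.1.le hv.1.le)) hv.1
      rwa [hGb] at this
    refine ⟨hpos, iff_of_false (not_not_intro ?_) (fun h => absurd h hlt.ne)⟩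
    apply integrable_of_linear_lower (G N c) G_meas hb1 hPb
    intro v hv
    have := G_lower hN hc b hb0 hbmem.1.le v (mem_Ici.2 hv.1.le)
    rw [hGb, zero_add] at this
    exact this
  · -- c = cstar : nonintegrable, double zero
    have h0 := vm_pos hN hc
    have hvm_sq : vm N c ^ 2 = (N - 2) / N := by
      rw [vm_sq hN hc, heq, hstar, hss]
    have hvm1 : vm N c < 1 := by nlinarith
    have hGvm : G N c (vm N c) = 0 := by
      rw [G_vm hN hc, hvm_sq]
      field_simp
      ring
    have hT : IsGreatest ({0} ∪ {v ∈ Ioc (0:ℝ) 1 | G N c v ≤ 0}) (vm N c) := by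
      constructor
      · exact Or.inr ⟨⟨h0, hvm1.le⟩, hGvm.le⟩
      · rintro x (rfl | ⟨hx1, hx2⟩)
        · exact h0.le
        · by_contra hbx
          push_neg at hbx
          have hx : 0 < G N c x := by
            have := G_mono hN hc self_mem_Ici (mem_Ici.2 hbx.le) hbx
            rwa [hGvm] at this
          linarith
    rw [hT.csSup_eq]
    have hpos : ∀ v ∈ Ioo (vm N c) 1, 0 < G N c v := by
      intro v hv
      have := G_mono hN hc self_mem_Ici (mem_Ici.2 hv.1.le) hv.1
      rwa [hGvm] at this
    refine ⟨hpos, iff_of_true ?_ heq⟩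
    apply not_integrable_of_sq_upper (G N c) hvm1 (half_pos (Q_pos hN hc)) hpos
    intro v hv
    have := G_taylor hN hc v (mem_Ici.2 hv.1.le)
    rw [hGvm, zero_add] at this
    exact this
  · -- cstar < c : integrable, no zero
    have hkey : ∀ v, 0 < v → v ≤ 1 → 2 * (c - cstar) ≤ G N c v := by
      intro v hv0 hv1
      have h2 : G N cstar (vm N cstar) = 0 := by
        rw [G_vm hN hcstar_pos, vm_sq hN hcstar_pos, hstar, hss]
        field_simp
        ring
      have hstar_min : 0 ≤ G N cstar v := by
        have h1 := G_min hN hcstar_pos hv0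
        linarith
      have hrp : (1:ℝ) ≤ v ^ (2 - N : ℝ) :=
        Real.one_le_rpow_of_pos_of_le_one_of_nonpos hv0 hv1 (by linarith)
      have hsplit : G N c v = G N cstar v + 2 * (c - cstar) * v ^ (2 - N : ℝ) := by
        simp only [Stmt12Aux.G]
        ring
      nlinarith [mul_le_mul_of_nonneg_left hrp (by linarith : (0:ℝ) ≤ 2 * (c - cstar))]
    have hempty : {v ∈ Ioc (0:ℝ) 1 | G N c v ≤ 0} = ∅ := by
      ext v
      simp only [mem_setOf_eq, mem_empty_iff_false, iff_false, not_and, mem_Ioc]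
      intro hv
      have := hkey v hv.1 hv.2
      intro h
      linarith
    rw [hempty, union_empty, csSup_singleton]
    constructor
    · intro v hv
      have := hkey v hv.1 hv.2.le
      linarith
    · refine iff_of_false (not_not_intro ?_) (fun h => absurd h hgt.ne')
      exact integrable_of_pos_lower (G N c) G_meas (by linarith : (0:ℝ) < 2 * (c - cstar))
        (fun v hv => hkey v hv.1 hv.2.le)
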